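/- Under the hypotheses of the shadowing lemma for matrix sequences, the shadowing vector v is unique: if v, v' ∈ E₀ᵘ both satisfy |Aₙ⋯A₀v − vₙ₊₁| ≤ C_ε·exp(εn) and |Aₙ⋯A₀v' − vₙ₊₁| ≤ C_ε·exp(εn) for all ε > 0 (with ε < α) and all n, then v = v'. -/

import Mathlib

/-- The composition `A (n+k) ∘ A (n+k-1) ∘ ⋯ ∘ A n` of a sequence of continuous linear
operators. -/
noncomputable def opProd {E : Type*} [NormedAddCommGroup E] [NormedSpace ℝ E]
    (A : ℕ → E →L[ℝ] E) : ℕ → ℕ → (E →L[ℝ] E)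
  | n, 0 => A n
  | n, k + 1 => (A (n + k + 1)).comp (opProd A n k)

/-- Uniqueness of the shadowing vector: if `v, v' ∈ E₀ᵘ` both shadow the same sequence
`(vₙ)` with subexponential error `C_ε exp(εn)` for every `0 < ε < α`, and the products
`Aₙ⋯A₀` expand `E₀ᵘ` at exponential rate `α` (i.e. `|Aₙ⋯A₀ w| ≥ C⁻¹ exp(αn)|w|` for
`w ∈ E₀ᵘ`), then `v = v'`. -/
theorem shadowing_unique (m : ℕ)
    (A : ℕ → EuclideanSpace ℝ (Fin m) →L[ℝ] EuclideanSpace ℝ (Fin m))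
    (Eu0 : Submodule ℝ (EuclideanSpace ℝ (Fin m)))
    (C α : ℝ) (hC : 0 < C) (hα : 0 < α)
    (hexp : ∀ n : ℕ, ∀ w ∈ Eu0, C⁻¹ * Real.exp (α * n) * ‖w‖ ≤ ‖opProd A 0 n w‖)
    (vseq : ℕ → EuclideanSpace ℝ (Fin m))
    (v v' : EuclideanSpace ℝ (Fin m)) (hv : v ∈ Eu0) (hv' : v' ∈ Eu0)
    (hshadow : ∀ ε, 0 < ε → ε < α → ∃ Cε > (0:ℝ), ∀ n : ℕ,
      ‖opProd A 0 n v - vseq (n + 1)‖ ≤ Cε * Real.exp (ε * n))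
    (hshadow' : ∀ ε, 0 < ε → ε < α → ∃ Cε > (0:ℝ), ∀ n : ℕ,
      ‖opProd A 0 n v' - vseq (n + 1)‖ ≤ Cε * Real.exp (ε * n)) :
    v = v' := by

  by_contra hne
  have hw : v - v' ∈ Eu0 := Eu0.sub_mem hv hv'
  have hwpos : 0 < ‖v - v'‖ := by
    simpa [sub_eq_zero] using hne
  obtain ⟨C1, hC1, h1⟩ := hshadow (α/2) (by linarith) (by linarith)
  obtain ⟨C2, hC2, h2⟩ := hshadow' (α/2) (by linarith) (by linarith)
  -- main estimate: for all n, C⁻¹ exp(αn) ‖v-v'‖ ≤ (C1+C2) exp(αn/2)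
  have key : ∀ n : ℕ, C⁻¹ * Real.exp (α * n) * ‖v - v'‖ ≤ (C1 + C2) * Real.exp (α/2 * n) := by
    intro n
    have h3 := hexp n (v - v') hw
    have h4 : ‖opProd A 0 n (v - v')‖ ≤ C1 * Real.exp (α/2 * n) + C2 * Real.exp (α/2 * n) := by
      have : opProd A 0 n (v - v') =
          (opProd A 0 n v - vseq (n+1)) - (opProd A 0 n v' - vseq (n+1)) := by
        simp [map_sub]
      rw [this]
      exact (norm_sub_le _ _).trans (add_le_add (h1 n) (h2 n))
    nlinarith [h3]
  -- so ‖v-v'‖ ≤ C(C1+C2) exp(-αn/2) → 0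
  have key2 : ∀ n : ℕ, ‖v - v'‖ ≤ C * (C1 + C2) * Real.exp (-(α/2) * n) := by
    intro n
    have h := key n
    have he : Real.exp (α * n) = Real.exp (α/2 * n) * Real.exp (α/2 * n) := by
      rw [← Real.exp_add]; ring_nf
    have hp : (0:ℝ) < Real.exp (α/2 * n) := Real.exp_pos _
    have hn : Real.exp (-(α/2) * n) = (Real.exp (α/2 * n))⁻¹ := by
      rw [← Real.exp_neg]; ring_nf
    rw [hn]
    rw [he] at h
    have h5 : C⁻¹ * Real.exp (α/2 * n) * ‖v - v'‖ ≤ C1 + C2 := by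
      rw [← mul_le_mul_iff_of_pos_right hp]; nlinarith [h]
    calc ‖v - v'‖ = (C⁻¹ * Real.exp (α/2 * n) * ‖v - v'‖) * (C * (Real.exp (α/2 * n))⁻¹) := by
          field_simp
    _ ≤ (C1 + C2) * (C * (Real.exp (α/2 * n))⁻¹) :=
        mul_le_mul_of_nonneg_right h5 (by positivity)
    _ = C * (C1 + C2) * (Real.exp (α/2 * n))⁻¹ := by ring
  have hlim : Filter.Tendsto (fun n : ℕ => C * (C1 + C2) * Real.exp (-(α/2) * n))
      Filter.atTop (nhds 0) := by
    rw [show (0:ℝ) = C * (C1+C2) * 0 by ring]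
    apply Filter.Tendsto.const_mul
    have : Filter.Tendsto (fun x : ℝ => Real.exp (-(α/2) * x)) Filter.atTop (nhds 0) := by
      apply Real.tendsto_exp_atBot.comp
      exact Filter.Tendsto.const_mul_atTop_of_neg (by linarith) Filter.tendsto_id
    exact this.comp tendsto_natCast_atTop_atTop
  have : ‖v - v'‖ ≤ 0 := le_of_tendsto_of_tendsto' tendsto_const_nhds hlim key2
  linarith
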